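/- Let A=(a_ij) be a triply-laced symmetrizable GCM such that X_sh={p} consists of a single index. Then for all w_1,w_2∈W, ⟨w_1·α_p∨, w_2·α_p⟩ ≡ 2 or −2 (mod 3); in particular it is never divisible by 3, so there do not exist two real roots β_1,β_2∈W·α_p with ⟨β_1∨,β_2⟩=0, and hence there is no π-system of type A_1×A_1 in A contained wholly in the shortest real roots. The same conclusions hold when X_long={q} is a single index, with the longest real roots W·α_q in place of W·α_p. -/
import Mathlib


/-- An integer matrix is a generalized Cartan matrix. -/
def IsGCM {n : ℕ} (A : Matrix (Fin n) (Fin n) ℤ) : Prop :=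
  (∀ i, A i i = 2) ∧ (∀ i j, i ≠ j → A i j ≤ 0) ∧ (∀ i j, A i j = 0 → A j i = 0)

/-- `d` is a symmetrizer of `A`: positive rationals with `dᵢ aᵢⱼ = dⱼ aⱼᵢ`. -/
def IsSymmetrizer {n : ℕ} (A : Matrix (Fin n) (Fin n) ℤ) (d : Fin n → ℚ) : Prop :=
  (∀ i, 0 < d i) ∧ ∀ i j, d i * A i j = d j * A j i

/-- The pairing `⟨γ∨, β⟩` between the coroot lattice and the root lattice:
in coordinates (γ in the coroot basis, β in the root basis) it is `∑ γᵢ aᵢⱼ βⱼ`,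
so that `⟨αᵢ∨, αⱼ⟩ = aᵢⱼ`. -/
def pairing {n : ℕ} (A : Matrix (Fin n) (Fin n) ℤ) (y x : Fin n → ℤ) : ℤ :=
  ∑ i, ∑ j, y i * A i j * x j

/-- Simple reflection `s_k` acting on the root lattice: `s_k x = x − ⟨α_k∨, x⟩ α_k`. -/
def sRoot {n : ℕ} (A : Matrix (Fin n) (Fin n) ℤ) (k : Fin n) (x : Fin n → ℤ) : Fin n → ℤ :=
  fun i => x i - (if i = k then ∑ j, A k j * x j else 0)

/-- Simple reflection `s_k` acting on the coroot lattice: `s_k(αⱼ∨) = αⱼ∨ − aⱼₖ α_k∨`. -/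
def sCoroot {n : ℕ} (A : Matrix (Fin n) (Fin n) ℤ) (k : Fin n) (y : Fin n → ℤ) : Fin n → ℤ :=
  fun i => y i - (if i = k then ∑ j, y j * A j k else 0)

/-- Action on the root lattice of a Weyl group element given as a word in simple reflections. -/
def actRoot {n : ℕ} (A : Matrix (Fin n) (Fin n) ℤ) (w : List (Fin n)) (x : Fin n → ℤ) :
    Fin n → ℤ :=
  w.foldr (sRoot A) x

/-- Action on the coroot lattice of a Weyl group element given as a word in simple reflections. -/
def actCoroot {n : ℕ} (A : Matrix (Fin n) (Fin n) ℤ) (w : List (Fin n)) (y : Fin n → ℤ) :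
    Fin n → ℤ :=
  w.foldr (sCoroot A) y

namespace NoA1A1Aux
open Matrix

lemma mul_eq_one_neg (a b : ℤ) (ha : a ≤ 0) (hb : b ≤ 0) (h : a * b = 1) :
    a = -1 ∧ b = -1 := by
  have h1 : a ∣ 1 := ⟨b, h.symm⟩
  have h2 := Int.le_of_dvd one_pos h1
  have h3 : -1 ≤ a := by have := Int.le_of_dvd one_pos ((neg_dvd).mpr h1); omega
  interval_cases a <;> omega

lemma mul_eq_three_neg (a b : ℤ) (ha : a ≤ 0) (hb : b ≤ 0) (h : a * b = 3) :
    (a = -1 ∧ b = -3) ∨ (a = -3 ∧ b = -1) := by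
  have h1 : a ∣ 3 := ⟨b, h.symm⟩
  have h2 := Int.le_of_dvd (by norm_num) h1
  have h3 : -3 ≤ a := by
    have := Int.le_of_dvd (show (0:ℤ) < 3 by norm_num) ((neg_dvd).mpr h1); omega
  interval_cases a <;> omega

def good {n : ℕ} (p : Fin n) (y : Fin n → ℤ) : Prop :=
  (((y p : ℤ) : ZMod 3) = 1 ∨ ((y p : ℤ) : ZMod 3) = 2) ∧
    ∀ i, i ≠ p → ((y i : ℤ) : ZMod 3) = 0

def wgood {n : ℕ} (p : Fin n) (x : Fin n → ℤ) : Prop :=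
  ((x p : ℤ) : ZMod 3) = 1 ∨ ((x p : ℤ) : ZMod 3) = 2

lemma good_single {n : ℕ} (p : Fin n) : good p (Pi.single p 1) :=
  ⟨Or.inl (by simp), fun i hi => by simp [Pi.single_eq_of_ne hi]⟩

lemma wgood_single {n : ℕ} (p : Fin n) : wgood p (Pi.single p 1) :=
  Or.inl (by simp)

lemma good_sCoroot {n : ℕ} (A : Matrix (Fin n) (Fin n) ℤ) (p : Fin n) (hpp : A p p = 2)
    (hrow : ∀ j, j ≠ p → ((A p j : ℤ) : ZMod 3) = 0) (k : Fin n) (y : Fin n → ℤ)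
    (hy : good p y) : good p (sCoroot A k y) := by
  have hsum : ∀ m : Fin n, ((∑ j, y j * A j m : ℤ) : ZMod 3)
      = ((y p : ℤ) : ZMod 3) * ((A p m : ℤ) : ZMod 3) := by
    intro m
    push_cast
    exact Finset.sum_eq_single p (fun j _ hj => by rw [hy.2 j hj, zero_mul]) (by simp)
  constructor
  · by_cases hk : p = k
    · subst hk
      have he : sCoroot A p y p = y p - ∑ j, y j * A j p := by simp [sCoroot]
      rw [he, Int.cast_sub, hsum, hpp]
      rcases hy.1 with h | h <;> rw [h] <;> decide
    · have he : sCoroot A k y p = y p := by simp [sCoroot, hk]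
      rw [he]; exact hy.1
  · intro i hi
    by_cases hik : i = k
    · subst hik
      have he : sCoroot A i y i = y i - ∑ j, y j * A j i := by simp [sCoroot]
      rw [he, Int.cast_sub, hsum, hy.2 i hi, hrow i hi, mul_zero, sub_zero]
    · have he : sCoroot A k y i = y i := by simp [sCoroot, hik]
      rw [he]; exact hy.2 i hi

lemma wgood_sRoot {n : ℕ} (A : Matrix (Fin n) (Fin n) ℤ) (p : Fin n) (hpp : A p p = 2)
    (hrow : ∀ j, j ≠ p → ((A p j : ℤ) : ZMod 3) = 0) (k : Fin n) (x : Fin n → ℤ)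
    (hx : wgood p x) : wgood p (sRoot A k x) := by
  by_cases hk : p = k
  · subst hk
    have he : sRoot A p x p = x p - ∑ j, A p j * x j := by simp [sRoot]
    have hsum : ((∑ j, A p j * x j : ℤ) : ZMod 3)
        = ((A p p : ℤ) : ZMod 3) * ((x p : ℤ) : ZMod 3) := by
      push_cast
      exact Finset.sum_eq_single p (fun j _ hj => by rw [hrow j hj, zero_mul]) (by simp)
    unfold wgood
    rw [he, Int.cast_sub, hsum, hpp]
    rcases hx with h | h <;> rw [h] <;> decide
  · have he : sRoot A k x p = x p := by simp [sRoot, hk]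
    unfold wgood; rw [he]; exact hx

lemma good_act {n : ℕ} (A : Matrix (Fin n) (Fin n) ℤ) (p : Fin n) (hpp : A p p = 2)
    (hrow : ∀ j, j ≠ p → ((A p j : ℤ) : ZMod 3) = 0) (w : List (Fin n)) :
    good p (actCoroot A w (Pi.single p 1)) := by
  induction w with
  | nil => exact good_single p
  | cons k w ih => exact good_sCoroot A p hpp hrow k _ ih

lemma wgood_act {n : ℕ} (A : Matrix (Fin n) (Fin n) ℤ) (p : Fin n) (hpp : A p p = 2)
    (hrow : ∀ j, j ≠ p → ((A p j : ℤ) : ZMod 3) = 0) (w : List (Fin n)) :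
    wgood p (actRoot A w (Pi.single p 1)) := by
  induction w with
  | nil => exact wgood_single p
  | cons k w ih => exact wgood_sRoot A p hpp hrow k _ ih

lemma pairing_mod {n : ℕ} (A : Matrix (Fin n) (Fin n) ℤ) (p : Fin n) (hpp : A p p = 2)
    (hrow : ∀ j, j ≠ p → ((A p j : ℤ) : ZMod 3) = 0) (y x : Fin n → ℤ)
    (hy : good p y) (hx : wgood p x) :
    ((pairing A y x : ℤ) : ZMod 3) = 2 ∨ ((pairing A y x : ℤ) : ZMod 3) = 1 := by
  have hcalc : ((pairing A y x : ℤ) : ZMod 3)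
      = ((y p : ℤ) : ZMod 3) * ((A p p : ℤ) : ZMod 3) * ((x p : ℤ) : ZMod 3) := by
    unfold pairing
    push_cast
    rw [Finset.sum_eq_single p
      (fun i _ hi => Finset.sum_eq_zero fun j _ => by rw [hy.2 i hi, zero_mul, zero_mul])
      (by simp)]
    exact Finset.sum_eq_single p
      (fun j _ hj => by rw [hrow j hj, mul_zero, zero_mul]) (by simp)
  rw [hcalc, hpp]
  rcases hy.1 with h1 | h1 <;> rcases hx with h2 | h2 <;> rw [h1, h2] <;> decide

lemma sRoot_transpose {n : ℕ} (A : Matrix (Fin n) (Fin n) ℤ) :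
    sRoot Aᵀ = sCoroot A := by
  funext k x i
  unfold sRoot sCoroot
  congr 1
  by_cases h : i = k
  · simp only [h, if_true]
    exact Finset.sum_congr rfl fun j _ => by rw [Matrix.transpose_apply, mul_comm]
  · simp [h]

lemma sCoroot_transpose {n : ℕ} (A : Matrix (Fin n) (Fin n) ℤ) :
    sCoroot Aᵀ = sRoot A := by
  funext k x i
  unfold sRoot sCoroot
  congr 1
  by_cases h : i = k
  · simp only [h, if_true]
    exact Finset.sum_congr rfl fun j _ => by rw [Matrix.transpose_apply, mul_comm]
  · simp [h]

lemma actRoot_transpose {n : ℕ} (A : Matrix (Fin n) (Fin n) ℤ) (w : List (Fin n))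
    (x : Fin n → ℤ) : actRoot Aᵀ w x = actCoroot A w x := by
  unfold actRoot actCoroot
  rw [sRoot_transpose]

lemma actCoroot_transpose {n : ℕ} (A : Matrix (Fin n) (Fin n) ℤ) (w : List (Fin n))
    (x : Fin n → ℤ) : actCoroot Aᵀ w x = actRoot A w x := by
  unfold actRoot actCoroot
  rw [sCoroot_transpose]

lemma pairing_transpose {n : ℕ} (A : Matrix (Fin n) (Fin n) ℤ) (y x : Fin n → ℤ) :
    pairing Aᵀ y x = pairing A x y := by
  unfold pairing
  rw [Finset.sum_comm]
  exact Finset.sum_congr rfl fun j _ => Finset.sum_congr rfl fun i _ => by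
    rw [Matrix.transpose_apply]; ring

end NoA1A1Aux

set_option maxHeartbeats 1000000 in
/-- Let `A` be a triply-laced symmetrizable GCM. If `X_sh = {p}` is a
single index, then `⟨w₁·α_p∨, w₂·α_p⟩ ≡ ±2 (mod 3)` for all `w₁, w₂ ∈ W`; in particular
it is never divisible by 3, so no two real roots in `W·α_p` pair to `0`, and there is no
π-system of type `A₁ × A₁` wholly in the shortest real roots. The same holds with
`X_long = {q}` and the longest real roots `W·α_q`. -/
theorem no_A1xA1_in_short_triply {n : ℕ} (A : Matrix (Fin n) (Fin n) ℤ) (hA : IsGCM A)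
    (d : Fin n → ℚ) (hd : IsSymmetrizer A d)
    (hlaced : ∀ i j, i ≠ j → A i j * A j i = 0 ∨ A i j * A j i = 1 ∨ A i j * A j i = 3)
    (hattained : ∃ i j, i ≠ j ∧ A i j * A j i = 3) :
    (∀ p : Fin n, (∀ i, (∀ k, d i ≤ d k) ↔ i = p) →
      (∀ w₁ w₂ : List (Fin n),
        Int.ModEq 3 (pairing A (actCoroot A w₁ (Pi.single p 1))
            (actRoot A w₂ (Pi.single p 1))) 2 ∨
        Int.ModEq 3 (pairing A (actCoroot A w₁ (Pi.single p 1))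
            (actRoot A w₂ (Pi.single p 1))) (-2)) ∧
      (∀ w₁ w₂ : List (Fin n),
        ¬ (3 ∣ pairing A (actCoroot A w₁ (Pi.single p 1)) (actRoot A w₂ (Pi.single p 1)))) ∧
      ¬ ∃ w₁ w₂ : List (Fin n),
        pairing A (actCoroot A w₁ (Pi.single p 1)) (actRoot A w₂ (Pi.single p 1)) = 0)
    ∧
    (∀ q : Fin n, (∀ i, (∀ k, d k ≤ d i) ↔ i = q) →
      (∀ w₁ w₂ : List (Fin n),
        Int.ModEq 3 (pairing A (actCoroot A w₁ (Pi.single q 1))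
            (actRoot A w₂ (Pi.single q 1))) 2 ∨
        Int.ModEq 3 (pairing A (actCoroot A w₁ (Pi.single q 1))
            (actRoot A w₂ (Pi.single q 1))) (-2)) ∧
      (∀ w₁ w₂ : List (Fin n),
        ¬ (3 ∣ pairing A (actCoroot A w₁ (Pi.single q 1)) (actRoot A w₂ (Pi.single q 1)))) ∧
      ¬ ∃ w₁ w₂ : List (Fin n),
        pairing A (actCoroot A w₁ (Pi.single q 1)) (actRoot A w₂ (Pi.single q 1)) = 0) := by
  clear hattained
  obtain ⟨hdiag, hneg, hzero⟩ := hA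
  obtain ⟨hdpos, hsym⟩ := hd
  open NoA1A1Aux Matrix in
  constructor
  · -- short roots
    intro p hp
    have hmin : ∀ m, d p ≤ d m := (hp p).mpr rfl
    have hrow : ∀ j, j ≠ p → ((A p j : ℤ) : ZMod 3) = 0 := by
      intro j hj
      have hdvd : (3:ℤ) ∣ A p j := by
        rcases hlaced p j (Ne.symm hj) with h0 | h1 | h3
        · rcases mul_eq_zero.mp h0 with h | h
          · rw [h]; exact dvd_zero 3
          · rw [hzero j p h]; exact dvd_zero 3
        · exfalso
          obtain ⟨e1, e2⟩ := mul_eq_one_neg _ _ (hneg p j (Ne.symm hj)) (hneg j p hj) h1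
          have hs := hsym p j
          rw [e1, e2] at hs
          push_cast at hs
          have hdeq : d p = d j := by linarith
          exact hj ((hp j).mp (fun m => by rw [← hdeq]; exact hmin m))
        · rcases mul_eq_three_neg _ _ (hneg p j (Ne.symm hj)) (hneg j p hj) h3 with
            ⟨e1, e2⟩ | ⟨e1, e2⟩
          · exfalso
            have hs := hsym p j
            rw [e1, e2] at hs
            push_cast at hs
            have h1 := hmin j
            have h2 := hdpos j
            linarith
          · rw [e1]; norm_num
      exact (ZMod.intCast_zmod_eq_zero_iff_dvd _ 3).mpr (by exact_mod_cast hdvd)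
    have key : ∀ w₁ w₂ : List (Fin n),
        ((pairing A (actCoroot A w₁ (Pi.single p 1)) (actRoot A w₂ (Pi.single p 1)) : ℤ)
          : ZMod 3) = 2 ∨
        ((pairing A (actCoroot A w₁ (Pi.single p 1)) (actRoot A w₂ (Pi.single p 1)) : ℤ)
          : ZMod 3) = 1 := fun w₁ w₂ =>
      pairing_mod A p (hdiag p) hrow _ _
        (good_act A p (hdiag p) hrow w₁) (wgood_act A p (hdiag p) hrow w₂)
    have hnd : ∀ w₁ w₂ : List (Fin n),
        ¬ (3 ∣ pairing A (actCoroot A w₁ (Pi.single p 1)) (actRoot A w₂ (Pi.single p 1))) := by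
      intro w₁ w₂ hdv
      have h0 : ((pairing A (actCoroot A w₁ (Pi.single p 1)) (actRoot A w₂ (Pi.single p 1)) : ℤ)
          : ZMod 3) = 0 :=
        (ZMod.intCast_zmod_eq_zero_iff_dvd _ 3).mpr (by exact_mod_cast hdv)
      rcases key w₁ w₂ with h | h <;> rw [h0] at h <;> exact absurd h (by decide)
    refine ⟨?_, hnd, ?_⟩
    · intro w₁ w₂
      rcases key w₁ w₂ with h | h
      · exact Or.inl ((ZMod.intCast_eq_intCast_iff _ _ _).mp (by rw [h]; decide))
      · exact Or.inr ((ZMod.intCast_eq_intCast_iff _ _ _).mp (by rw [h]; decide))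
    · rintro ⟨w₁, w₂, h0⟩
      exact hnd w₁ w₂ (by rw [h0]; exact dvd_zero 3)
  · -- long roots, via transpose
    intro q hq
    have hmax : ∀ m, d m ≤ d q := (hq q).mpr rfl
    have hrow : ∀ j, j ≠ q → ((Aᵀ q j : ℤ) : ZMod 3) = 0 := by
      intro j hj
      rw [Matrix.transpose_apply]
      have hdvd : (3:ℤ) ∣ A j q := by
        rcases hlaced j q hj with h0 | h1 | h3
        · rcases mul_eq_zero.mp h0 with h | h
          · rw [h]; exact dvd_zero 3
          · rw [hzero q j h]; exact dvd_zero 3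
        · exfalso
          obtain ⟨e1, e2⟩ := mul_eq_one_neg _ _ (hneg j q hj) (hneg q j (Ne.symm hj)) h1
          have hs := hsym j q
          rw [e1, e2] at hs
          push_cast at hs
          have hdeq : d j = d q := by linarith
          exact hj ((hq j).mp (fun m => by rw [hdeq]; exact hmax m))
        · rcases mul_eq_three_neg _ _ (hneg j q hj) (hneg q j (Ne.symm hj)) h3 with
            ⟨e1, e2⟩ | ⟨e1, e2⟩
          · exfalso
            have hs := hsym j q
            rw [e1, e2] at hs
            push_cast at hs
            have h1 := hmax j
            have h2 := hdpos q
            linarith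
          · rw [e1]; norm_num
      exact (ZMod.intCast_zmod_eq_zero_iff_dvd _ 3).mpr (by exact_mod_cast hdvd)
    have hqq : Aᵀ q q = 2 := by rw [Matrix.transpose_apply]; exact hdiag q
    have key : ∀ w₁ w₂ : List (Fin n),
        ((pairing A (actCoroot A w₁ (Pi.single q 1)) (actRoot A w₂ (Pi.single q 1)) : ℤ)
          : ZMod 3) = 2 ∨
        ((pairing A (actCoroot A w₁ (Pi.single q 1)) (actRoot A w₂ (Pi.single q 1)) : ℤ)
          : ZMod 3) = 1 := by
      intro w₁ w₂
      have hswap : pairing A (actCoroot A w₁ (Pi.single q 1)) (actRoot A w₂ (Pi.single q 1))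
          = pairing Aᵀ (actCoroot Aᵀ w₂ (Pi.single q 1)) (actRoot Aᵀ w₁ (Pi.single q 1)) := by
        rw [actCoroot_transpose, actRoot_transpose, pairing_transpose]
      rw [hswap]
      exact pairing_mod Aᵀ q hqq hrow _ _
        (good_act Aᵀ q hqq hrow w₂) (wgood_act Aᵀ q hqq hrow w₁)
    have hnd : ∀ w₁ w₂ : List (Fin n),
        ¬ (3 ∣ pairing A (actCoroot A w₁ (Pi.single q 1)) (actRoot A w₂ (Pi.single q 1))) := by
      intro w₁ w₂ hdv
      have h0 : ((pairing A (actCoroot A w₁ (Pi.single q 1)) (actRoot A w₂ (Pi.single q 1)) : ℤ)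
          : ZMod 3) = 0 :=
        (ZMod.intCast_zmod_eq_zero_iff_dvd _ 3).mpr (by exact_mod_cast hdv)
      rcases key w₁ w₂ with h | h <;> rw [h0] at h <;> exact absurd h (by decide)
    refine ⟨?_, hnd, ?_⟩
    · intro w₁ w₂
      rcases key w₁ w₂ with h | h
      · exact Or.inl ((ZMod.intCast_eq_intCast_iff _ _ _).mp (by rw [h]; decide))
      · exact Or.inr ((ZMod.intCast_eq_intCast_iff _ _ _).mp (by rw [h]; decide))
    · rintro ⟨w₁, w₂, h0⟩
      exact hnd w₁ w₂ (by rw [h0]; exact dvd_zero 3)
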